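/- Darboux transformation for the self-adjoint 7-point scheme: let a, b, s, f : ℤ² → ℝ and let ψ, θ : ℤ² → ℝ both be solutions of the self-adjoint 7-point scheme with coefficients a, b, s, f, with θ(m,n) ≠ 0 for all (m,n). Then there exists ψ' : ℤ² → ℝ such that for all (m,n): Δ_n(ψ'·θ)(m,n) = (a(m−1,n)θ(m,n)θ(m−1,n) + s(m,n)θ(m−1,n)θ(m,n−1))·(ψ(m−1,n)/θ(m−1,n) − ψ(m,n)/θ(m,n)) − s(m,n)θ(m−1,n)θ(m,n−1)·(ψ(m,n−1)/θ(m,n−1) − ψ(m,n)/θ(m,n)) and Δ_m(ψ'·θ)(m,n) = −(b(m,n−1)θ(m,n)θ(m,n−1) + s(m,n)θ(m−1,n)θ(m,n−1))·(ψ(m,n−1)/θ(m,n−1) − ψ(m,n)/θ(m,n)) + s(m,n)θ(m−1,n)θ(m,n−1)·(ψ(m−1,n)/θ(m−1,n) − ψ(m,n)/θ(m,n)). Moreover, set p(m,n) = θ(m,n)a(m−1,n)b(m,n−1) + θ(m−1,n)s(m,n)a(m−1,n) + s(m,n)θ(m,n−1)b(m,n−1) and assume p(m,n) ≠ 0 for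 all (m,n); then every such ψ' is a solution of the self-adjoint 7-point scheme with coefficients a'(m,n) = θ(m,n)θ(m+1,n)a(m−1,n)/(θ(m,n−1)p(m,n)), b'(m,n) = θ(m,n)θ(m,n+1)b(m,n−1)/(θ(m−1,n)p(m,n)), s'(m,n) = s(m−1,n−1)θ(m−1,n)θ(m,n−1)/(θ(m−1,n−1)p(m−1,n−1)), and f'(m,n) = θ(m,n)·[a'(m,n)/θ(m+1,n) + a'(m−1,n)/θ(m−1,n) + b'(m,n)/θ(m,n+1) + b'(m,n−1)/θ(m,n−1) + s'(m+1,n)/θ(m+1,n−1) + s'(m,n+1)/θ(m−1,n+1)]. -/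

import Mathlib

/-- The self-adjoint 7-point scheme. -/
def Is7PointSolution (a b s f ψ : ℤ → ℤ → ℝ) : Prop :=
  ∀ m n : ℤ,
    a m n * ψ (m + 1) n + a (m - 1) n * ψ (m - 1) n
      + b m n * ψ m (n + 1) + b m (n - 1) * ψ m (n - 1)
      + s (m + 1) n * ψ (m + 1) (n - 1) + s m (n + 1) * ψ (m - 1) (n + 1)
      = f m n * ψ m n

/-- The defining difference equations of the Darboux transform `ψ'` built from the
pair of solutions `(ψ, θ)` of the 7-point scheme. -/
def DarbouxData (a b s ψ θ ψ' : ℤ → ℤ → ℝ) : Prop :=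
  ∀ m n : ℤ,
    (ψ' m (n + 1) * θ m (n + 1) - ψ' m n * θ m n
      = (a (m - 1) n * θ m n * θ (m - 1) n + s m n * θ (m - 1) n * θ m (n - 1))
          * (ψ (m - 1) n / θ (m - 1) n - ψ m n / θ m n)
        - s m n * θ (m - 1) n * θ m (n - 1)
          * (ψ m (n - 1) / θ m (n - 1) - ψ m n / θ m n)) ∧
    (ψ' (m + 1) n * θ (m + 1) n - ψ' m n * θ m n
      = -((b m (n - 1) * θ m n * θ m (n - 1) + s m n * θ (m - 1) n * θ m (n - 1))
          * (ψ m (n - 1) / θ m (n - 1) - ψ m n / θ m n))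
        + s m n * θ (m - 1) n * θ m (n - 1)
          * (ψ (m - 1) n / θ (m - 1) n - ψ m n / θ m n))

noncomputable def antidiff (g : ℤ → ℝ) (k : ℤ) : ℝ :=
  (∑ i ∈ Finset.Ico (0:ℤ) k, g i) - ∑ i ∈ Finset.Ico k (0:ℤ), g i

lemma sum_Ico_consec (g : ℤ → ℝ) {a b c : ℤ} (hab : a ≤ b) (hbc : b ≤ c) :
    (∑ i ∈ Finset.Ico a b, g i) + ∑ i ∈ Finset.Ico b c, g i = ∑ i ∈ Finset.Ico a c, g i :=
  Finset.Ico_union_Ico_eq_Ico hab hbc ▸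
    Eq.symm (Finset.sum_union (Finset.Ico_disjoint_Ico_consecutive a b c))

lemma Ico_int_succ_self (k : ℤ) : Finset.Ico k (k+1) = {k} := by
  ext x; simp; omega

lemma antidiff_succ (g : ℤ → ℝ) (k : ℤ) : antidiff g (k+1) = antidiff g k + g k := by
  unfold antidiff
  rcases le_or_gt 0 k with h | h
  · rw [← sum_Ico_consec g h (by omega : k ≤ k + 1), Ico_int_succ_self,
      Finset.Ico_eq_empty (by omega : ¬ k < 0), Finset.Ico_eq_empty (by omega : ¬ k + 1 < 0)]
    simp
  · rw [← sum_Ico_consec g (by omega : k ≤ k + 1) (by omega : k + 1 ≤ 0), Ico_int_succ_self,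
      Finset.Ico_eq_empty (by omega : ¬ (0:ℤ) < k), Finset.Ico_eq_empty (by omega : ¬ (0:ℤ) < k + 1)]
    simp

lemma antidiff_zero (g : ℤ → ℝ) : antidiff g 0 = 0 := by simp [antidiff]

/-- clean (denominator-free) form of the Δ_n increment -/
def Fc (a s ψ θ : ℤ → ℤ → ℝ) (m n : ℤ) : ℝ :=
  a (m-1) n * (ψ (m-1) n * θ m n - ψ m n * θ (m-1) n)
    + s m n * (ψ (m-1) n * θ m (n-1) - ψ m (n-1) * θ (m-1) n)

/-- clean (denominator-free) form of the Δ_m increment -/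
def Gc (b s ψ θ : ℤ → ℤ → ℝ) (m n : ℤ) : ℝ :=
  -(b m (n-1) * (ψ m (n-1) * θ m n - ψ m n * θ m (n-1)))
    + s m n * (ψ (m-1) n * θ m (n-1) - ψ m (n-1) * θ (m-1) n)

lemma Fc_eq (a s ψ θ : ℤ → ℤ → ℝ) (hθne : ∀ m n : ℤ, θ m n ≠ 0) (m n : ℤ) :
    (a (m - 1) n * θ m n * θ (m - 1) n + s m n * θ (m - 1) n * θ m (n - 1))
        * (ψ (m - 1) n / θ (m - 1) n - ψ m n / θ m n)
      - s m n * θ (m - 1) n * θ m (n - 1)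
        * (ψ m (n - 1) / θ m (n - 1) - ψ m n / θ m n) = Fc a s ψ θ m n := by
  unfold Fc
  field_simp [hθne m n, hθne (m-1) n, hθne m (n-1)]
  ring

lemma Gc_eq (b s ψ θ : ℤ → ℤ → ℝ) (hθne : ∀ m n : ℤ, θ m n ≠ 0) (m n : ℤ) :
    -((b m (n - 1) * θ m n * θ m (n - 1) + s m n * θ (m - 1) n * θ m (n - 1))
        * (ψ m (n - 1) / θ m (n - 1) - ψ m n / θ m n))
      + s m n * θ (m - 1) n * θ m (n - 1)
        * (ψ (m - 1) n / θ (m - 1) n - ψ m n / θ m n) = Gc b s ψ θ m n := by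
  unfold Gc
  field_simp [hθne m n, hθne (m-1) n, hθne m (n-1)]
  ring

lemma compat (a b s f ψ θ : ℤ → ℤ → ℝ)
    (hψ : Is7PointSolution a b s f ψ) (hθ : Is7PointSolution a b s f θ) (m n : ℤ) :
    Fc a s ψ θ m n + Gc b s ψ θ m (n+1) = Gc b s ψ θ m n + Fc a s ψ θ (m+1) n := by
  have h1 := hψ m n
  have h2 := hθ m n
  simp only [Fc, Gc, add_sub_cancel_right]
  linear_combination θ m n * h1 - ψ m n * h2

noncomputable def uDef (a b s ψ θ : ℤ → ℤ → ℝ) (m n : ℤ) : ℝ :=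
  antidiff (fun i => Gc b s ψ θ i 0) m + antidiff (fun j => Fc a s ψ θ m j) n

lemma uDef_n (a b s ψ θ : ℤ → ℤ → ℝ) (m n : ℤ) :
    uDef a b s ψ θ m (n+1) - uDef a b s ψ θ m n = Fc a s ψ θ m n := by
  simp [uDef, antidiff_succ]

lemma uDef_m (a b s f ψ θ : ℤ → ℤ → ℝ)
    (hψ : Is7PointSolution a b s f ψ) (hθ : Is7PointSolution a b s f θ) (m n : ℤ) :
    uDef a b s ψ θ (m+1) n - uDef a b s ψ θ m n = Gc b s ψ θ m n := by
  have base : uDef a b s ψ θ (m+1) 0 - uDef a b s ψ θ m 0 = Gc b s ψ θ m 0 := by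
    simp [uDef, antidiff_zero, antidiff_succ]
  have up : ∀ k : ℤ, uDef a b s ψ θ (m+1) k - uDef a b s ψ θ m k = Gc b s ψ θ m k →
      uDef a b s ψ θ (m+1) (k+1) - uDef a b s ψ θ m (k+1) = Gc b s ψ θ m (k+1) := by
    intro k hk
    have c := compat a b s f ψ θ hψ hθ m k
    have e1 := uDef_n a b s ψ θ (m+1) k
    have e2 := uDef_n a b s ψ θ m k
    linarith
  have down : ∀ k : ℤ, uDef a b s ψ θ (m+1) k - uDef a b s ψ θ m k = Gc b s ψ θ m k →
      uDef a b s ψ θ (m+1) (k-1) - uDef a b s ψ θ m (k-1) = Gc b s ψ θ m (k-1) := by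
    intro k hk
    have c := compat a b s f ψ θ hψ hθ m (k-1)
    rw [sub_add_cancel] at c
    have e1 := uDef_n a b s ψ θ (m+1) (k-1)
    have e2 := uDef_n a b s ψ θ m (k-1)
    rw [sub_add_cancel] at e1 e2
    linarith
  induction n using Int.induction_on with
  | zero => exact base
  | succ i ih => exact up i ih
  | pred i ih => exact (by simpa [sub_eq_add_neg, add_comm, add_left_comm] using down (-i) ih)

/-- Darboux transformation for the self-adjoint 7-point scheme:
a transform `ψ'` exists, and (provided `p ≠ 0` everywhere) every such `ψ'` solves
the 7-point scheme with the transformed coefficients `a'`, `b'`, `s'`, `f'`. -/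

lemma grp1 (A B S u v w x y z : ℝ) (hv : v ≠ 0) (hw : w ≠ 0)
    (hq : u*A*B + v*S*A + S*w*B ≠ 0) :
    A / (w * (u*A*B + v*S*A + S*w*B)) * (-(B*(z*u - x*w)) + S*(y*w - z*v))
      + B / (v * (u*A*B + v*S*A + S*w*B)) * (A*(y*u - x*v) + S*(y*w - z*v))
      = (y*w - z*v) / (v*w) := by
  set q := u*A*B + v*S*A + S*w*B with hqdef
  field_simp
  rw [hqdef]
  ring

lemma grp2 (A B S u v w x y z : ℝ) (hu : u ≠ 0) (hw : w ≠ 0)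
    (hq : u*A*B + v*S*A + S*w*B ≠ 0) :
    -(A / (w * (u*A*B + v*S*A + S*w*B)) * (-(B*(z*u - x*w)) + S*(y*w - z*v)))
      + S / (u * (u*A*B + v*S*A + S*w*B))
        * ((A*(y*u - x*v) + S*(y*w - z*v)) - (-(B*(z*u - x*w)) + S*(y*w - z*v)))
      = (z*u - x*w) / (w*u) := by
  set q := u*A*B + v*S*A + S*w*B with hqdef
  field_simp
  rw [hqdef]
  ring

lemma grp3 (A B S u v w x y z : ℝ) (hu : u ≠ 0) (hv : v ≠ 0)
    (hq : u*A*B + v*S*A + S*w*B ≠ 0) :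
    -(B / (v * (u*A*B + v*S*A + S*w*B)) * (A*(y*u - x*v) + S*(y*w - z*v)))
      + S / (u * (u*A*B + v*S*A + S*w*B))
        * ((-(B*(z*u - x*w)) + S*(y*w - z*v)) - (A*(y*u - x*v) + S*(y*w - z*v)))
      = -((y*u - x*v) / (v*u)) := by
  set q := u*A*B + v*S*A + S*w*B with hqdef
  field_simp
  rw [hqdef]
  ring

lemma tri3 (P Q R X Y Z : ℝ) (hP : P ≠ 0) (hQ : Q ≠ 0) (hR : R ≠ 0) :
    (X*Q - Y*P)/(P*Q) + (Z*P - X*R)/(R*P) + -((Z*Q - Y*R)/(R*Q)) = 0 := by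
  field_simp
  ring

lemma assemble (c1 c2 c3 c4 c5 c6 t0 t1 t2 t3 t4 t5 t6 x x1 x2 x3 x4 x5 x6 d1 d2 d3 d4 d5 d6 fv : ℝ)
    (h1 : t1 ≠ 0) (h2 : t2 ≠ 0) (h3 : t3 ≠ 0) (h4 : t4 ≠ 0) (h5 : t5 ≠ 0) (h6 : t6 ≠ 0)
    (e1 : x1*t1 - x*t0 = d1) (e2 : x2*t2 - x*t0 = d2) (e3 : x3*t3 - x*t0 = d3)
    (e4 : x4*t4 - x*t0 = d4) (e5 : x5*t5 - x*t0 = d5) (e6 : x6*t6 - x*t0 = d6)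
    (hf : fv = t0*(c2/t2 + c3/t3 + c1/t1 + c4/t4 + c5/t5 + c6/t6))
    (hkey : c1/t1*d1 + c2/t2*d2 + c3/t3*d3 + c4/t4*d4 + c5/t5*d5 + c6/t6*d6 = 0) :
    c2*x2 + c3*x3 + c1*x1 + c4*x4 + c5*x5 + c6*x6 = fv*x := by
  have f1 : x1 = x*t0/t1 + d1/t1 := by field_simp; linarith
  have f2 : x2 = x*t0/t2 + d2/t2 := by field_simp; linarith
  have f3 : x3 = x*t0/t3 + d3/t3 := by field_simp; linarith
  have f4 : x4 = x*t0/t4 + d4/t4 := by field_simp; linarith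
  have f5 : x5 = x*t0/t5 + d5/t5 := by field_simp; linarith
  have f6 : x6 = x*t0/t6 + d6/t6 := by field_simp; linarith
  rw [f1, f2, f3, f4, f5, f6, hf]
  linear_combination hkey

set_option maxHeartbeats 4000000 in
theorem darboux_7point
    (a b s f ψ θ : ℤ → ℤ → ℝ)
    (hψ : Is7PointSolution a b s f ψ) (hθ : Is7PointSolution a b s f θ)
    (hθne : ∀ m n : ℤ, θ m n ≠ 0)
    (p : ℤ → ℤ → ℝ)
    (hp : ∀ m n : ℤ, p m n
      = θ m n * a (m - 1) n * b m (n - 1) + θ (m - 1) n * s m n * a (m - 1) n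
        + s m n * θ m (n - 1) * b m (n - 1)) :
    (∃ ψ' : ℤ → ℤ → ℝ, DarbouxData a b s ψ θ ψ') ∧
    ((∀ m n : ℤ, p m n ≠ 0) →
      ∀ a' b' s' f' : ℤ → ℤ → ℝ,
        (∀ m n : ℤ, a' m n = θ m n * θ (m + 1) n * a (m - 1) n / (θ m (n - 1) * p m n)) →
        (∀ m n : ℤ, b' m n = θ m n * θ m (n + 1) * b m (n - 1) / (θ (m - 1) n * p m n)) →
        (∀ m n : ℤ, s' m n
          = s (m - 1) (n - 1) * θ (m - 1) n * θ m (n - 1) / (θ (m - 1) (n - 1) * p (m - 1) (n - 1))) →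
        (∀ m n : ℤ, f' m n
          = θ m n * (a' m n / θ (m + 1) n + a' (m - 1) n / θ (m - 1) n
            + b' m n / θ m (n + 1) + b' m (n - 1) / θ m (n - 1)
            + s' (m + 1) n / θ (m + 1) (n - 1) + s' m (n + 1) / θ (m - 1) (n + 1))) →
        ∀ ψ' : ℤ → ℤ → ℝ, DarbouxData a b s ψ θ ψ' →
          Is7PointSolution a' b' s' f' ψ') := by
  constructor
  · refine ⟨fun m n => uDef a b s ψ θ m n / θ m n, fun m n => ?_⟩
    have key : ∀ m' n' : ℤ, uDef a b s ψ θ m' n' / θ m' n' * θ m' n' = uDef a b s ψ θ m' n' :=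
      fun m' n' => div_mul_cancel₀ _ (hθne m' n')
    constructor
    · rw [key, key, Fc_eq a s ψ θ hθne m n]
      exact uDef_n a b s ψ θ m n
    · rw [key, key, Gc_eq b s ψ θ hθne m n]
      exact uDef_m a b s f ψ θ hψ hθ m n
  · intro hpne a' b' s' f' ha' hb' hs' hf' ψ' hdd m n
    have hddc : ∀ m' n' : ℤ,
        (ψ' m' (n' + 1) * θ m' (n' + 1) - ψ' m' n' * θ m' n' = Fc a s ψ θ m' n') ∧
        (ψ' (m' + 1) n' * θ (m' + 1) n' - ψ' m' n' * θ m' n' = Gc b s ψ θ m' n') :=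
      fun m' n' => ⟨(hdd m' n').1.trans (Fc_eq a s ψ θ hθne m' n'),
        (hdd m' n').2.trans (Gc_eq b s ψ θ hθne m' n')⟩
    have h1 := (hddc m n).1
    have h2 := (hddc m n).2
    have h3 := (hddc (m-1) n).2
    rw [sub_add_cancel m 1] at h3
    have h4 := (hddc m (n-1)).1
    rw [sub_add_cancel n 1] at h4
    have h5 := (hddc m (n-1)).2
    have h6 := (hddc (m-1) n).1
    have e3 : ψ' (m-1) n * θ (m-1) n - ψ' m n * θ m n = -(Gc b s ψ θ (m-1) n) := by linarith
    have e4 : ψ' m (n-1) * θ m (n-1) - ψ' m n * θ m n = -(Fc a s ψ θ m (n-1)) := by linarith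
    have e5 : ψ' (m+1) (n-1) * θ (m+1) (n-1) - ψ' m n * θ m n
        = Gc b s ψ θ m (n-1) - Fc a s ψ θ m (n-1) := by linarith
    have e6 : ψ' (m-1) (n+1) * θ (m-1) (n+1) - ψ' m n * θ m n
        = Fc a s ψ θ (m-1) n - Gc b s ψ θ (m-1) n := by linarith
    -- nonvanishing of the polynomial forms of p
    have hq1 : θ m n * a (m-1) n * b m (n-1) + θ (m-1) n * s m n * a (m-1) n
        + s m n * θ m (n-1) * b m (n-1) ≠ 0 := by rw [← hp m n]; exact hpne m n
    have hq2 : θ (m-1) n * a (m-1-1) n * b (m-1) (n-1) + θ (m-1-1) n * s (m-1) n * a (m-1-1) n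
        + s (m-1) n * θ (m-1) (n-1) * b (m-1) (n-1) ≠ 0 := by
      rw [← hp (m-1) n]; exact hpne (m-1) n
    have hq3 : θ m (n-1) * a (m-1) (n-1) * b m (n-1-1) + θ (m-1) (n-1) * s m (n-1) * a (m-1) (n-1)
        + s m (n-1) * θ m (n-1-1) * b m (n-1-1) ≠ 0 := by
      rw [← hp m (n-1)]; exact hpne m (n-1)
    -- reduced forms of the coefficient/θ quotients
    have r1 : b' m n / θ m (n+1)
        = θ m n * b m (n-1) / (θ (m-1) n * (θ m n * a (m-1) n * b m (n-1)
            + θ (m-1) n * s m n * a (m-1) n + s m n * θ m (n-1) * b m (n-1))) := by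
      rw [hb' m n, hp m n]
      field_simp [hθne m (n+1), hθne (m-1) n, hq1]
    have r2 : a' m n / θ (m+1) n
        = θ m n * a (m-1) n / (θ m (n-1) * (θ m n * a (m-1) n * b m (n-1)
            + θ (m-1) n * s m n * a (m-1) n + s m n * θ m (n-1) * b m (n-1))) := by
      rw [ha' m n, hp m n]
      field_simp [hθne (m+1) n, hθne m (n-1), hq1]
    have r3 : a' (m-1) n / θ (m-1) n
        = θ m n * a (m-1-1) n / (θ (m-1) (n-1) * (θ (m-1) n * a (m-1-1) n * b (m-1) (n-1)
            + θ (m-1-1) n * s (m-1) n * a (m-1-1) n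
            + s (m-1) n * θ (m-1) (n-1) * b (m-1) (n-1))) := by
      rw [ha' (m-1) n, hp (m-1) n, sub_add_cancel m 1]
      field_simp [hθne (m-1) n, hθne (m-1) (n-1), hq2]
    have r4 : b' m (n-1) / θ m (n-1)
        = θ m n * b m (n-1-1) / (θ (m-1) (n-1) * (θ m (n-1) * a (m-1) (n-1) * b m (n-1-1)
            + θ (m-1) (n-1) * s m (n-1) * a (m-1) (n-1)
            + s m (n-1) * θ m (n-1-1) * b m (n-1-1))) := by
      rw [hb' m (n-1), hp m (n-1), sub_add_cancel n 1]
      field_simp [hθne m (n-1), hθne (m-1) (n-1), hq3]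
    have r5 : s' (m+1) n / θ (m+1) (n-1)
        = θ m n * s m (n-1) / (θ m (n-1) * (θ m (n-1) * a (m-1) (n-1) * b m (n-1-1)
            + θ (m-1) (n-1) * s m (n-1) * a (m-1) (n-1)
            + s m (n-1) * θ m (n-1-1) * b m (n-1-1))) := by
      rw [hs' (m+1) n, hp (m+1-1) (n-1), add_sub_cancel_right m 1]
      field_simp [hθne (m+1) (n-1), hθne m (n-1), hq3]
    have r6 : s' m (n+1) / θ (m-1) (n+1)
        = θ m n * s (m-1) n / (θ (m-1) n * (θ (m-1) n * a (m-1-1) n * b (m-1) (n-1)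
            + θ (m-1-1) n * s (m-1) n * a (m-1-1) n
            + s (m-1) n * θ (m-1) (n-1) * b (m-1) (n-1))) := by
      rw [hs' m (n+1), hp (m-1) (n+1-1), add_sub_cancel_right n 1]
      field_simp [hθne (m-1) (n+1), hθne (m-1) n, hq2]
    -- the key vanishing identity
    have key : b' m n / θ m (n+1) * (Fc a s ψ θ m n)
        + a' m n / θ (m+1) n * (Gc b s ψ θ m n)
        + a' (m-1) n / θ (m-1) n * (-(Gc b s ψ θ (m-1) n))
        + b' m (n-1) / θ m (n-1) * (-(Fc a s ψ θ m (n-1)))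
        + s' (m+1) n / θ (m+1) (n-1) * (Gc b s ψ θ m (n-1) - Fc a s ψ θ m (n-1))
        + s' m (n+1) / θ (m-1) (n+1) * (Fc a s ψ θ (m-1) n - Gc b s ψ θ (m-1) n) = 0 := by
      rw [r1, r2, r3, r4, r5, r6]
      have g1 := grp1 (a (m-1) n) (b m (n-1)) (s m n) (θ m n) (θ (m-1) n) (θ m (n-1))
        (ψ m n) (ψ (m-1) n) (ψ m (n-1)) (hθne (m-1) n) (hθne m (n-1)) hq1
      have g2 := grp2 (a (m-1-1) n) (b (m-1) (n-1)) (s (m-1) n) (θ (m-1) n) (θ (m-1-1) n)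
        (θ (m-1) (n-1)) (ψ (m-1) n) (ψ (m-1-1) n) (ψ (m-1) (n-1))
        (hθne (m-1) n) (hθne (m-1) (n-1)) hq2
      have g3 := grp3 (a (m-1) (n-1)) (b m (n-1-1)) (s m (n-1)) (θ m (n-1)) (θ (m-1) (n-1))
        (θ m (n-1-1)) (ψ m (n-1)) (ψ (m-1) (n-1)) (ψ m (n-1-1))
        (hθne m (n-1)) (hθne (m-1) (n-1)) hq3
      have tr := tri3 (θ (m-1) n) (θ m (n-1)) (θ (m-1) (n-1)) (ψ (m-1) n) (ψ m (n-1))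
        (ψ (m-1) (n-1)) (hθne (m-1) n) (hθne m (n-1)) (hθne (m-1) (n-1))
      simp only [Fc, Gc]
      linear_combination (θ m n) * g1 + (θ m n) * g2 + (θ m n) * g3 + (θ m n) * tr
    have HH := assemble (b' m n) (a' m n) (a' (m-1) n) (b' m (n-1)) (s' (m+1) n) (s' m (n+1))
      (θ m n) (θ m (n+1)) (θ (m+1) n) (θ (m-1) n) (θ m (n-1)) (θ (m+1) (n-1)) (θ (m-1) (n+1))
      (ψ' m n) (ψ' m (n+1)) (ψ' (m+1) n) (ψ' (m-1) n) (ψ' m (n-1)) (ψ' (m+1) (n-1))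
      (ψ' (m-1) (n+1))
      (Fc a s ψ θ m n) (Gc b s ψ θ m n) (-(Gc b s ψ θ (m-1) n)) (-(Fc a s ψ θ m (n-1)))
      (Gc b s ψ θ m (n-1) - Fc a s ψ θ m (n-1)) (Fc a s ψ θ (m-1) n - Gc b s ψ θ (m-1) n)
      (f' m n)
      (hθne m (n+1)) (hθne (m+1) n) (hθne (m-1) n) (hθne m (n-1)) (hθne (m+1) (n-1))
      (hθne (m-1) (n+1))
      h1 h2 e3 e4 e5 e6 (hf' m n) key
    linear_combination HH
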